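/- Let λ ∈ (0,1), let f : (0,∞) → ℝ be differentiable, and let g : (0,∞) → ℝ. Assume that for every R > 0: (i) f(R) ≤ R·g(R); (ii) g(R) ≤ f′(R); (iii) g is integrable on the interval (0,R] and f(R) ≥ ∫₀^R g(r) dr; and (iv) g(λR) = g(R). Then there exists a constant c ∈ ℝ such that g(R) = c and f(R) = c·R for every R > 0. -/

import Mathlib

open MeasureTheory

/-- The analytic core of the existence of horizontal tangent cones: if `f` is
differentiable on `(0, ∞)`, `f R ≤ R * g R` (cone comparison), `g R ≤ f' R`
(slicing), `g` is integrable on `(0, R]` with `∫₀^R g ≤ f R`, and `g` is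
invariant under dilation by some `λ ∈ (0,1)`, then `g` is a constant `c` on
`(0, ∞)` and `f R = c * R` there. -/
theorem projected_mass_constant (l : ℝ) (hl0 : 0 < l) (hl1 : l < 1)
    (f g : ℝ → ℝ)
    (hdiff : ∀ R : ℝ, 0 < R → DifferentiableAt ℝ f R)
    (hcone : ∀ R : ℝ, 0 < R → f R ≤ R * g R)
    (hslice : ∀ R : ℝ, 0 < R → g R ≤ deriv f R)
    (hint : ∀ R : ℝ, 0 < R → IntegrableOn g (Set.Ioc 0 R) ∧
      (∫ r in Set.Ioc (0 : ℝ) R, g r) ≤ f R)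
    (hdil : ∀ R : ℝ, 0 < R → g (l * R) = g R) :
    ∃ c : ℝ, ∀ R : ℝ, 0 < R → g R = c ∧ f R = c * R := by
  set φ : ℝ → ℝ := fun x => f x / x with hφ
  -- g R ≥ φ R
  have hgφ : ∀ R : ℝ, 0 < R → φ R ≤ g R := by
    intro R hR
    rw [hφ]
    exact (div_le_iff₀ hR).2 (by linarith [hcone R hR, mul_comm R (g R)])
  -- φ monotone on Ioi 0
  have hmono : MonotoneOn φ (Set.Ioi (0:ℝ)) := by
    apply monotoneOn_of_deriv_nonneg (convex_Ioi 0)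
    · intro x hx
      exact ((hdiff x hx).div differentiableAt_fun_id (ne_of_gt hx)).continuousAt.continuousWithinAt
    · rw [interior_Ioi]
      intro x hx
      exact ((hdiff x hx).div differentiableAt_fun_id (ne_of_gt hx)).differentiableWithinAt
    · rw [interior_Ioi]
      intro x hx
      have hx0 : (x:ℝ) ≠ 0 := ne_of_gt hx
      have hd : deriv φ x = (deriv f x * x - f x) / x ^ 2 := by
        rw [hφ, deriv_fun_div (hdiff x hx) differentiableAt_fun_id hx0]
        simp
      rw [hd]
      apply div_nonneg _ (sq_nonneg x)
      have hx' : (0:ℝ) < x := hx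
      have h1 : f x ≤ x * g x := hcone x hx
      have h2 : g x ≤ deriv f x := hslice x hx
      nlinarith [mul_le_mul_of_nonneg_left h2 hx'.le]
  -- key lower bound: for r ∈ (0, R₀], g r ≥ φ (l * R₀)
  have hkey : ∀ R₀ : ℝ, 0 < R₀ → ∀ r : ℝ, 0 < r → r ≤ R₀ → φ (l * R₀) ≤ g r := by
    intro R₀ hR₀ r hr hrR
    obtain ⟨n, hn⟩ : ∃ n : ℕ, l ^ (n+1) * R₀ < r := by
      obtain ⟨n, hn⟩ := exists_pow_lt_of_lt_one (div_pos hr hR₀) hl1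
      refine ⟨n, ?_⟩
      have h1 : l ^ (n+1) ≤ l ^ n := pow_le_pow_of_le_one hl0.le hl1.le (Nat.le_succ n)
      have h2 : l ^ n * R₀ < r := (lt_div_iff₀ hR₀).1 hn
      nlinarith
    induction n generalizing r with
    | zero =>
      have hn' : l * R₀ < r := by simpa using hn
      calc φ (l * R₀) ≤ φ r := hmono (Set.mem_Ioi.2 (by positivity))
            (Set.mem_Ioi.2 hr) hn'.le
        _ ≤ g r := hgφ r hr
    | succ n ih =>
      by_cases hcase : l * R₀ < r
      · calc φ (l * R₀) ≤ φ r := hmono (Set.mem_Ioi.2 (by positivity))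
              (Set.mem_Ioi.2 hr) hcase.le
          _ ≤ g r := hgφ r hr
      · push_neg at hcase
        have hr' : 0 < r / l := by positivity
        have h1 : r / l ≤ R₀ := (div_le_iff₀ hl0).2 (by linarith [mul_comm R₀ l])
        have h2 : l ^ (n+1) * R₀ < r / l := by
          rw [lt_div_iff₀ hl0]
          calc l ^ (n+1) * R₀ * l = l ^ (n+1+1) * R₀ := by ring
            _ < r := hn
        have := ih (r/l) hr' h1 h2
        rwa [← hdil (r/l) hr', mul_div_cancel₀ _ (ne_of_gt hl0)] at this
  -- hence φ R ≥ φ (l * R₀) for R ≤ R₀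
  have hφlow : ∀ R₀ : ℝ, 0 < R₀ → ∀ R : ℝ, 0 < R → R ≤ R₀ → φ (l * R₀) ≤ φ R := by
    intro R₀ hR₀ R hR hRR
    have hI := (hint R hR).1
    have hm : (volume (Set.Ioc (0:ℝ) R)).toReal = R := by
      simp [Real.volume_Ioc, ENNReal.toReal_ofReal hR.le]
    have hlow : φ (l * R₀) * R ≤ ∫ r in Set.Ioc (0:ℝ) R, g r := by
      have := setIntegral_ge_of_const_le_real (c := φ (l * R₀)) measurableSet_Ioc
        (by simp [Real.volume_Ioc]) (fun x hx => hkey R₀ hR₀ x hx.1 (hx.2.trans hRR)) hI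
      rwa [Measure.real, hm] at this
    have h2 : φ (l * R₀) * R ≤ f R := hlow.trans (hint R hR).2
    rw [hφ]
    exact (le_div_iff₀ hR).2 h2
  -- φ is constant: φ S = φ T for S ≤ T
  have hconst : ∀ S T : ℝ, 0 < S → 0 < T → S ≤ T → φ S = φ T := by
    intro S T hS hT hST
    refine le_antisymm (hmono hS hT hST) ?_
    have hTl : 0 < T / l := by positivity
    have hTT : T ≤ T / l := by
      rw [le_div_iff₀ hl0]; nlinarith
    have h1 : S ≤ T / l := hST.trans hTT
    have := hφlow (T / l) hTl S hS h1
    rwa [mul_div_cancel₀ _ (ne_of_gt hl0)] at this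
  set c := f 1 with hc
  have hφc : ∀ R : ℝ, 0 < R → φ R = c := by
    intro R hR
    have h1 : φ 1 = c := by simp [hφ, hc]
    rcases le_total R 1 with h | h
    · rw [hconst R 1 hR one_pos h, h1]
    · rw [← hconst 1 R one_pos hR h, h1]
  have hf : ∀ R : ℝ, 0 < R → f R = c * R := by
    intro R hR
    have := hφc R hR
    rw [hφ] at this
    field_simp at this
    linarith [this]
  refine ⟨c, fun R hR => ⟨?_, hf R hR⟩⟩
  have hlow : c ≤ g R := by
    have := hgφ R hR
    rwa [hφc R hR] at this
  have hup : g R ≤ c := by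
    have hev : f =ᶠ[nhds R] fun x => c * x := by
      filter_upwards [Ioi_mem_nhds hR] with x hx
      exact hf x hx
    have : deriv f R = c := by
      rw [hev.deriv_eq]
      have : HasDerivAt (fun x : ℝ => c * x) (c * 1) R := (hasDerivAt_id R).const_mul c
      rw [this.deriv, mul_one]
    linarith [hslice R hR]
  linarith
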